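/- Let P₀, P₁, …, P_k be probability measures on a common measurable space and let ε₁, …, ε_k ≥ 0 and δ ≥ 0 be such that for each i ∈ {1, …, k}, the pair (P_{i−1}, P_i) is (ε_i, δ)-indistinguishable. Then (P₀, P_k) are (ε₁ + ⋯ + ε_k, δ·(1 + e^{ε₁} + e^{ε₁+ε₂} + ⋯ + e^{ε₁+⋯+ε_{k−1}}))-indistinguishable. -/

import Mathlib

open MeasureTheory Finset

/-- `(P, Q)` are `(ε, δ)`-indistinguishable: for every measurable set `S`,
`P(S) ≤ e^ε · Q(S) + δ`. -/
def Indist {X : Type*} [MeasurableSpace X] (P Q : Measure X) (ε δ : ℝ) : Prop :=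
  ∀ S : Set X, MeasurableSet S → (P S).toReal ≤ Real.exp ε * (Q S).toReal + δ

/-- Chaining `k` indistinguishability guarantees along a path `P 0, P 1, …, P k`:
the endpoints are `(∑ εᵢ, δ·(1 + e^{ε₁} + e^{ε₁+ε₂} + ⋯ + e^{ε₁+⋯+ε_{k−1}}))`-
indistinguishable.  (Here `ε i` is the 0-indexed version of `ε_{i+1}`, so the
additive parameter is `δ · ∑_{j=0}^{k-1} exp (∑_{i<j} ε i)`, whose `j = 0` term
is `1`.) -/
theorem chain_composition_of_indistinguishability
    {X : Type*} [MeasurableSpace X] (k : ℕ) (P : ℕ → Measure X)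
    (hP : ∀ i ≤ k, IsProbabilityMeasure (P i))
    (ε : ℕ → ℝ) (δ : ℝ) (hε : ∀ i < k, 0 ≤ ε i) (hδ : 0 ≤ δ)
    (h : ∀ i < k, Indist (P i) (P (i + 1)) (ε i) δ) :
    Indist (P 0) (P k) (∑ i ∈ range k, ε i)
      (δ * ∑ j ∈ range k, Real.exp (∑ i ∈ range j, ε i)) := by
  induction k with
  | zero =>
    intro S hS
    simp
  | succ k ih =>
    intro S hS
    have ih' := ih (fun i hi => hP i (hi.trans (Nat.le_succ k)))
      (fun i hi => hε i (hi.trans (Nat.lt_succ_self k)))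
      (fun i hi => h i (hi.trans (Nat.lt_succ_self k))) S hS
    have hlast := h k (Nat.lt_succ_self k) S hS
    have hEpos : (0:ℝ) ≤ Real.exp (∑ i ∈ range k, ε i) := (Real.exp_pos _).le
    calc ((P 0) S).toReal
        ≤ Real.exp (∑ i ∈ range k, ε i) * ((P k) S).toReal
            + δ * ∑ j ∈ range k, Real.exp (∑ i ∈ range j, ε i) := ih'
      _ ≤ Real.exp (∑ i ∈ range k, ε i) *
            (Real.exp (ε k) * ((P (k+1)) S).toReal + δ)
            + δ * ∑ j ∈ range k, Real.exp (∑ i ∈ range j, ε i) := by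
          gcongr
      _ = Real.exp (∑ i ∈ range (k+1), ε i) * ((P (k+1)) S).toReal
            + δ * ∑ j ∈ range (k+1), Real.exp (∑ i ∈ range j, ε i) := by
          rw [Finset.sum_range_succ, Finset.sum_range_succ, Real.exp_add]
          ring
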